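/- Let B be a connected real quiver of rank n ≥ 4 which contains the Markov quiver as a proper subquiver, i.e. some principal 3×3 submatrix of B equals, up to simultaneous permutation of its indices, the cyclic quiver (2,2,2). Then B is mutation-infinite. -/

import Mathlib

open Real

noncomputable section

namespace RealQuiver

variable {n : ℕ}

/-- Mutation of a real quiver (a skew-symmetric real matrix) at vertex `k`. -/
def mutate (B : Matrix (Fin n) (Fin n) ℝ) (k : Fin n) : Matrix (Fin n) (Fin n) ℝ :=
  fun i j => if i = k ∨ j = k then -B i j
    else B i j + (|B i k| * B k j + B i k * |B k j|) / 2

/-- One mutation step. -/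
def MutStep (B C : Matrix (Fin n) (Fin n) ℝ) : Prop := ∃ k, C = mutate B k

/-- `C` is obtained from `B` by a finite sequence of mutations. -/
def Reachable (B C : Matrix (Fin n) (Fin n) ℝ) : Prop :=
  Relation.ReflTransGen MutStep B C

/-- `B` is mutation-finite. -/
def MutationFinite (B : Matrix (Fin n) (Fin n) ℝ) : Prop :=
  {C | Reachable B C}.Finite

/-- Simultaneous permutation of the indices of `B`. -/
def permute (B : Matrix (Fin n) (Fin n) ℝ) (σ : Equiv.Perm (Fin n)) :
    Matrix (Fin n) (Fin n) ℝ := fun i j => B (σ i) (σ j)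

/-- Mutation-equivalence: a finite sequence of mutations followed by a
simultaneous permutation of the indices. -/
def MutEquiv (B C : Matrix (Fin n) (Fin n) ℝ) : Prop :=
  ∃ C' σ, Reachable B C' ∧ C = permute C' σ

/-- The underlying (undirected) graph of a quiver. -/
def toGraph (B : Matrix (Fin n) (Fin n) ℝ) : SimpleGraph (Fin n) where
  Adj i j := i ≠ j ∧ (B i j ≠ 0 ∨ B j i ≠ 0)
  symm := ⟨fun i j h => ⟨h.1.symm, h.2.symm⟩⟩
  loopless := ⟨fun i h => h.1 rfl⟩

/-- Connectedness of a quiver. -/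
def Connected (B : Matrix (Fin n) (Fin n) ℝ) : Prop := (toGraph B).Connected

def IsSkewSymmetric (B : Matrix (Fin n) (Fin n) ℝ) : Prop :=
  ∀ i j, B j i = -B i j

/-- A quiver is cyclic if its directed graph (an arrow `i → j` whenever
`B i j > 0`) contains a directed cycle. -/
def Cyclic (B : Matrix (Fin n) (Fin n) ℝ) : Prop :=
  ∃ i, Relation.TransGen (fun a b => 0 < B a b) i i

def Acyclic (B : Matrix (Fin n) (Fin n) ℝ) : Prop := ¬ Cyclic B

/-- The rank-3 cyclic quiver `(a,b,c)`: `b₁₂ = a`, `b₂₃ = b`, `b₃₁ = c`. -/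
def cyclicQ (a b c : ℝ) : Matrix (Fin 3) (Fin 3) ℝ :=
  !![0, a, -c; -a, 0, b; c, -b, 0]

/-- The rank-3 acyclic quiver `(a,b,-c)`: `b₁₂ = a`, `b₂₃ = b`, `b₁₃ = c`. -/
def acyclicQ (a b c : ℝ) : Matrix (Fin 3) (Fin 3) ℝ :=
  !![0, a, c; -a, 0, b; -c, -b, 0]

/-- `d` is the highest denominator of the mutation class of `B`. -/
def HighestDenom (B : Matrix (Fin n) (Fin n) ℝ) (d : ℕ) : Prop :=
  (∀ C, MutEquiv B C → ∀ i j, i ≠ j →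
    C i j = 0 ∨ ∃ p q : ℕ, 2 * p < q ∧ q ≤ d ∧ |C i j| = 2 * Real.cos (π * p / q)) ∧
  (∃ C, MutEquiv B C ∧ ∃ i j, ∃ p : ℕ, 0 < p ∧ 2 * p < d ∧ Nat.gcd p d = 1 ∧
    |C i j| = 2 * Real.cos (π * p / d))

/-- The rank-4 quiver `L n` (even denominator `d = 2n`):
`b₁₂ = b₂₃ = 2cos(π/2n)`, `b₃₁ = 2`, `b₁₄ = b₄₃ = 2cos(π(n-1)/2n)`, `b₂₄ = 0`. -/
def Lq (n : ℕ) : Matrix (Fin 4) (Fin 4) ℝ :=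
  !![0, 2 * Real.cos (π / (2 * n)), -2, 2 * Real.cos (π * ((n : ℝ) - 1) / (2 * n));
     -(2 * Real.cos (π / (2 * n))), 0, 2 * Real.cos (π / (2 * n)), 0;
     2, -(2 * Real.cos (π / (2 * n))), 0, -(2 * Real.cos (π * ((n : ℝ) - 1) / (2 * n)));
     -(2 * Real.cos (π * ((n : ℝ) - 1) / (2 * n))), 0, 2 * Real.cos (π * ((n : ℝ) - 1) / (2 * n)), 0]

/-- The rank-4 quiver `M n` (even denominator `d = 2n`):
`b₁₂ = b₂₃ = 2cos(π/2n)`, `b₃₁ = 2`, `b₂₄ = 2cos(π(n-1)/2n)`, `b₁₄ = b₃₄ = 0`. -/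
def Mq (n : ℕ) : Matrix (Fin 4) (Fin 4) ℝ :=
  !![0, 2 * Real.cos (π / (2 * n)), -2, 0;
     -(2 * Real.cos (π / (2 * n))), 0, 2 * Real.cos (π / (2 * n)), 2 * Real.cos (π * ((n : ℝ) - 1) / (2 * n));
     2, -(2 * Real.cos (π / (2 * n))), 0, 0;
     0, -(2 * Real.cos (π * ((n : ℝ) - 1) / (2 * n))), 0, 0]

/-- The rank-4 quiver `O n` (odd denominator `d = 2n+1`):
`b₁₂ = b₂₃ = 2cos(π/d)`, `b₃₁ = 2`, `b₁₄ = b₂₄ = b₄₃ = 2cos(πn/d)`. -/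
def Oq (n : ℕ) : Matrix (Fin 4) (Fin 4) ℝ :=
  !![0, 2 * Real.cos (π / (2 * n + 1)), -2, 2 * Real.cos (π * n / (2 * n + 1));
     -(2 * Real.cos (π / (2 * n + 1))), 0, 2 * Real.cos (π / (2 * n + 1)), 2 * Real.cos (π * n / (2 * n + 1));
     2, -(2 * Real.cos (π / (2 * n + 1))), 0, -(2 * Real.cos (π * n / (2 * n + 1)));
     -(2 * Real.cos (π * n / (2 * n + 1))), -(2 * Real.cos (π * n / (2 * n + 1))), 2 * Real.cos (π * n / (2 * n + 1)), 0]

-- auxiliary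

lemma reach_mutate (B : Matrix (Fin n) (Fin n) ℝ) (k : Fin n) :
    Reachable B (mutate B k) :=
  Relation.ReflTransGen.single ⟨k, rfl⟩

lemma mutate_skew {B : Matrix (Fin n) (Fin n) ℝ} (h : IsSkewSymmetric B) (k : Fin n) :
    IsSkewSymmetric (mutate B k) := by
  intro i j
  unfold mutate
  by_cases hik : i = k
  · simp [hik, h j k]
  · by_cases hjk : j = k
    · simp [hjk, h i k]
    · have h1 : ¬ (i = k ∨ j = k) := by tauto
      have h2 : ¬ (j = k ∨ i = k) := by tauto
      rw [if_neg h2, if_neg h1, h i j, h k j, h i k, abs_neg, abs_neg]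
      ring

lemma mutate_ne {B : Matrix (Fin n) (Fin n) ℝ} {k i j : Fin n} (h1 : i ≠ k) (h2 : j ≠ k) :
    mutate B k i j = B i j + (|B i k| * B k j + B i k * |B k j|) / 2 := by
  simp [mutate, h1, h2]

lemma mutate_hit {B : Matrix (Fin n) (Fin n) ℝ} {k i j : Fin n} (h : i = k ∨ j = k) :
    mutate B k i j = -B i j := by
  simp only [mutate]
  rw [if_pos h]

/-- Triangle `a → b → c → a` with all weights 2. -/
def Tri (B : Matrix (Fin n) (Fin n) ℝ) (a b c : Fin n) : Prop :=
  B a b = 2 ∧ B b c = 2 ∧ B c a = 2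

lemma L_mut {B : Matrix (Fin n) (Fin n) ℝ} {a b c d : Fin n}
    (hsk : IsSkewSymmetric B)
    (hab : a ≠ b) (hac : a ≠ c) (hbc : b ≠ c)
    (hda : d ≠ a) (hdb : d ≠ b) (hdc : d ≠ c)
    (ht : Tri B a b c) :
    Tri (mutate B a) a c b ∧
    (mutate B a) d a = -(B d a) ∧
    (mutate B a) d b = B d b + B d a + |B d a| ∧
    (mutate B a) d c = B d c + B d a - |B d a| := by
  obtain ⟨h1, h2, h3⟩ := ht
  have hba : B b a = -2 := by rw [hsk a b, h1]
  have hca : B a c = -2 := by rw [hsk c a, h3]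
  have hcb : B c b = -2 := by rw [hsk b c, h2]
  refine ⟨⟨?_, ?_, ?_⟩, ?_, ?_, ?_⟩
  · rw [mutate_hit (Or.inl rfl), hca]; norm_num
  · rw [mutate_ne hac.symm hab.symm, h3, h1, hcb]; norm_num
  · rw [mutate_hit (Or.inr rfl), hba]; norm_num
  · exact mutate_hit (Or.inr rfl)
  · rw [mutate_ne hda hab.symm, h1]
    rw [show |(2:ℝ)| = 2 by norm_num]
    ring
  · rw [mutate_ne hda hac.symm, hca]
    rw [show |(-2:ℝ)| = 2 by norm_num]
    ring

lemma pump_step {B : Matrix (Fin n) (Fin n) ℝ} {a b c d : Fin n}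
    (hab : a ≠ b) (hac : a ≠ c) (hbc : b ≠ c)
    (hda : d ≠ a) (hdb : d ≠ b) (hdc : d ≠ c)
    (hsk : IsSkewSymmetric B) (ht : Tri B a b c)
    (hx : 0 < B d a) (hxy : 0 < B d a + B d b) :
    ∃ B', Reachable B B' ∧ IsSkewSymmetric B' ∧ Tri B' a b c ∧
      0 < B' d a ∧ 0 < B' d a + B' d b ∧
      B' d a = B d a + 2 * (B d a + B d b) ∧
      B' d a + B' d b = B d a + B d b := by
  obtain ⟨ht1, e1a, e1b, e1c⟩ := L_mut hsk hab hac hbc hda hdb hdc ht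
  have hsk1 : IsSkewSymmetric (mutate B a) := mutate_skew hsk a
  have ht1' : Tri (mutate B a) b a c := ⟨ht1.2.2, ht1.1, ht1.2.1⟩
  obtain ⟨ht2, e2b, e2a, e2c⟩ := L_mut hsk1 hab.symm hbc hac hdb hda hdc ht1'
  have hxabs : |B d a| = B d a := abs_of_pos hx
  have px : (mutate B a) d b = B d b + 2 * B d a := by rw [e1b, hxabs]; ring
  have hpos1 : 0 < (mutate B a) d b := by rw [px]; linarith
  have habs1 : |(mutate B a) d b| = (mutate B a) d b := abs_of_pos hpos1
  refine ⟨mutate (mutate B a) b,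
    (reach_mutate B a).trans (reach_mutate (mutate B a) b),
    mutate_skew hsk1 b, ⟨ht2.2.2, ht2.1, ht2.2.1⟩, ?_, ?_, ?_, ?_⟩
  · rw [e2a, habs1, px, e1a]; linarith
  · rw [e2a, e2b, habs1, px, e1a]; linarith
  · rw [e2a, habs1, px, e1a]; ring
  · rw [e2a, e2b, habs1, px, e1a]; ring

lemma pump {B : Matrix (Fin n) (Fin n) ℝ} {a b c d : Fin n}
    (hab : a ≠ b) (hac : a ≠ c) (hbc : b ≠ c)
    (hda : d ≠ a) (hdb : d ≠ b) (hdc : d ≠ c)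
    (hsk : IsSkewSymmetric B) (ht : Tri B a b c)
    (hx : 0 < B d a) (hxy : 0 < B d a + B d b) :
    ∀ m : ℕ, ∃ B', Reachable B B' ∧
      B d a + 2 * m * (B d a + B d b) ≤ B' d a := by
  have main : ∀ m : ℕ, ∃ B', Reachable B B' ∧ IsSkewSymmetric B' ∧ Tri B' a b c ∧
      0 < B' d a ∧ 0 < B' d a + B' d b ∧
      B d a + 2 * m * (B d a + B d b) ≤ B' d a ∧
      B' d a + B' d b = B d a + B d b := by
    intro m
    induction m with
    | zero => exact ⟨B, Relation.ReflTransGen.refl, hsk, ht, hx, hxy, by push_cast; linarith, rfl⟩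
    | succ m ih =>
        obtain ⟨C, hreach, hskC, htC, hxC, hxyC, hboundC, hsumC⟩ := ih
        obtain ⟨C', hreach', hskC', htC', hxC', hxyC', heq', hsum'⟩ :=
          pump_step hab hac hbc hda hdb hdc hskC htC hxC hxyC
        refine ⟨C', hreach.trans hreach', hskC', htC', hxC', hxyC', ?_, by rw [hsum', hsumC]⟩
        rw [heq', hsumC]
        push_cast
        linarith
  intro m
  obtain ⟨B', h1, _, _, _, _, h2, _⟩ := main m
  exact ⟨B', h1, h2⟩

lemma norm1 {B : Matrix (Fin n) (Fin n) ℝ} {a b c d : Fin n}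
    (hab : a ≠ b) (hac : a ≠ c) (hbc : b ≠ c)
    (hda : d ≠ a) (hdb : d ≠ b) (hdc : d ≠ c)
    (hsk : IsSkewSymmetric B) (ht : Tri B a b c) (hx : 0 < B d a) :
    ∃ B' a' b' c', Reachable B B' ∧
      (a' ≠ b' ∧ a' ≠ c' ∧ b' ≠ c' ∧ d ≠ a' ∧ d ≠ b' ∧ d ≠ c') ∧
      IsSkewSymmetric B' ∧ Tri B' a' b' c' ∧ 0 < B' d a' ∧ 0 < B' d a' + B' d b' := by
  by_cases hz : 0 < B d c
  · exact ⟨B, c, a, b, Relation.ReflTransGen.refl,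
      ⟨hac.symm, hbc.symm, hab, hdc, hda, hdb⟩, hsk,
      ⟨ht.2.2, ht.1, ht.2.1⟩, hz, by linarith⟩
  · push_neg at hz
    obtain ⟨ht1, e1c, e1a, e1b⟩ :=
      L_mut hsk hac.symm hbc.symm hab hdc hda hdb (⟨ht.2.2, ht.1, ht.2.1⟩ : Tri B c a b)
    have habs : |B d c| = -(B d c) := abs_of_nonpos hz
    refine ⟨mutate B c, a, c, b, reach_mutate B c,
      ⟨hac, hab, hbc.symm, hda, hdc, hdb⟩, mutate_skew hsk c,
      ⟨ht1.2.2, ht1.1, ht1.2.1⟩, ?_, ?_⟩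
    · rw [e1a, habs]; linarith
    · rw [e1a, e1c, habs]; linarith

lemma norm2 {B : Matrix (Fin n) (Fin n) ℝ} {a b c d : Fin n}
    (hab : a ≠ b) (hac : a ≠ c) (hbc : b ≠ c)
    (hda : d ≠ a) (hdb : d ≠ b) (hdc : d ≠ c)
    (hsk : IsSkewSymmetric B) (ht : Tri B a b c) (hx : B d a ≠ 0) :
    ∃ B' a' b' c', Reachable B B' ∧
      (a' ≠ b' ∧ a' ≠ c' ∧ b' ≠ c' ∧ d ≠ a' ∧ d ≠ b' ∧ d ≠ c') ∧
      IsSkewSymmetric B' ∧ Tri B' a' b' c' ∧ 0 < B' d a' ∧ 0 < B' d a' + B' d b' := by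
  rcases lt_or_gt_of_ne hx with hneg | hpos
  · obtain ⟨ht1, e1a, e1b, e1c⟩ := L_mut hsk hab hac hbc hda hdb hdc ht
    have hx1 : 0 < (mutate B a) d a := by rw [e1a]; linarith
    obtain ⟨B', a', b', c', hr, hd, hs, ht', h1, h2⟩ :=
      norm1 hac hab hbc.symm hda hdc hdb (mutate_skew hsk a) ht1 hx1
    exact ⟨B', a', b', c', (reach_mutate B a).trans hr, hd, hs, ht', h1, h2⟩
  · exact norm1 hab hac hbc hda hdb hdc hsk ht hpos

lemma norm3 {B : Matrix (Fin n) (Fin n) ℝ} {a b c d : Fin n}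
    (hab : a ≠ b) (hac : a ≠ c) (hbc : b ≠ c)
    (hda : d ≠ a) (hdb : d ≠ b) (hdc : d ≠ c)
    (hsk : IsSkewSymmetric B) (ht : Tri B a b c)
    (h : B d a ≠ 0 ∨ B d b ≠ 0 ∨ B d c ≠ 0) :
    ∃ B' a' b' c', Reachable B B' ∧
      (a' ≠ b' ∧ a' ≠ c' ∧ b' ≠ c' ∧ d ≠ a' ∧ d ≠ b' ∧ d ≠ c') ∧
      IsSkewSymmetric B' ∧ Tri B' a' b' c' ∧ 0 < B' d a' ∧ 0 < B' d a' + B' d b' := by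
  rcases h with h | h | h
  · exact norm2 hab hac hbc hda hdb hdc hsk ht h
  · exact norm2 hbc hab.symm hac.symm hdb hdc hda hsk ⟨ht.2.1, ht.2.2, ht.1⟩ h
  · exact norm2 hac.symm hbc.symm hab hdc hda hdb hsk ⟨ht.2.2, ht.1, ht.2.1⟩ h

lemma walk_exit {G : SimpleGraph (Fin n)} {S : Set (Fin n)} :
    ∀ {v t : Fin n}, G.Walk v t → t ∈ S → v ∉ S →
      ∃ x y, x ∉ S ∧ y ∈ S ∧ G.Adj x y := by
  intro v t p
  induction p with
  | nil => intro htS hv; exact absurd htS hv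
  | @cons u w _ h p ih =>
      intro htS hv
      by_cases hw : w ∈ S
      · exact ⟨u, w, hv, hw, h⟩
      · exact ih htS hw


/-- No connected mutation-finite quiver properly contains the Markov quiver. -/
theorem markov_subquiver_infinite {n : ℕ} (hn : 4 ≤ n)
    (B : Matrix (Fin n) (Fin n) ℝ) (hskew : IsSkewSymmetric B) (hconn : Connected B)
    (hsub : ∃ (f : Fin 3 ↪ Fin n) (σ : Equiv.Perm (Fin 3)),
      B.submatrix f f = permute (cyclicQ 2 2 2) σ) :
    ¬ MutationFinite B := by
  intro hMF
  obtain ⟨f, σ, hf⟩ := hsub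
  have hap : ∀ i j : Fin 3, B (f (σ.symm i)) (f (σ.symm j)) = cyclicQ 2 2 2 i j := by
    intro i j
    have h := congrFun (congrFun hf (σ.symm i)) (σ.symm j)
    simpa [permute, Matrix.submatrix_apply] using h
  have h01 : B (f (σ.symm 0)) (f (σ.symm 1)) = 2 := by
    rw [hap 0 1]; norm_num [cyclicQ]
  have h12 : B (f (σ.symm 1)) (f (σ.symm 2)) = 2 := by
    rw [hap 1 2]; norm_num [cyclicQ]; rfl
  have h20 : B (f (σ.symm 2)) (f (σ.symm 0)) = 2 := by
    rw [hap 2 0]; norm_num [cyclicQ]; rfl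
  set a := f (σ.symm 0) with ha
  set b := f (σ.symm 1) with hb
  set c := f (σ.symm 2) with hc
  have hab : a ≠ b := f.injective.ne (σ.symm.injective.ne (by decide))
  have hac : a ≠ c := f.injective.ne (σ.symm.injective.ne (by decide))
  have hbc : b ≠ c := f.injective.ne (σ.symm.injective.ne (by decide))
  -- find a vertex outside the triangle
  have hfin : ∃ v : Fin n, v ≠ a ∧ v ≠ b ∧ v ≠ c := by
    by_contra hcon
    push_neg at hcon
    have hsub2 : (Finset.univ : Finset (Fin n)) ⊆ {a, b, c} := by
      intro v _
      simp only [Finset.mem_insert, Finset.mem_singleton]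
      by_cases h1 : v = a
      · exact Or.inl h1
      by_cases h2 : v = b
      · exact Or.inr (Or.inl h2)
      exact Or.inr (Or.inr (hcon v h1 h2))
    have h1 := Finset.card_le_card hsub2
    have h2 : ({a, b, c} : Finset (Fin n)).card ≤ 3 := by
      calc ({a, b, c} : Finset (Fin n)).card
          ≤ ({b, c} : Finset (Fin n)).card + 1 := Finset.card_insert_le _ _
        _ ≤ (({c} : Finset (Fin n)).card + 1) + 1 :=
            Nat.add_le_add_right (Finset.card_insert_le _ _) 1
        _ ≤ 3 := by simp
    rw [Finset.card_univ, Fintype.card_fin] at h1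
    omega
  obtain ⟨v, hva, hvb, hvc⟩ := hfin
  -- walk from v to the triangle; find a vertex outside adjacent to the triangle
  have hconn' : (toGraph B).Connected := hconn
  obtain ⟨p⟩ := hconn'.preconnected v a
  have hvS : v ∉ ({a, b, c} : Set (Fin n)) := by simp [hva, hvb, hvc]
  have haS : a ∈ ({a, b, c} : Set (Fin n)) := by simp
  obtain ⟨d, y, hdS, hyS, hadj⟩ := walk_exit p haS hvS
  obtain ⟨hdy, hne⟩ : d ≠ y ∧ (B d y ≠ 0 ∨ B y d ≠ 0) := hadj
  have hBdy : B d y ≠ 0 := by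
    rcases hne with h | h
    · exact h
    · rw [hskew d y] at h
      simpa using h
  simp only [Set.mem_insert_iff, Set.mem_singleton_iff, not_or] at hdS
  obtain ⟨hda, hdb, hdc⟩ := hdS
  have hnon : B d a ≠ 0 ∨ B d b ≠ 0 ∨ B d c ≠ 0 := by
    simp only [Set.mem_insert_iff, Set.mem_singleton_iff] at hyS
    rcases hyS with rfl | rfl | rfl
    · exact Or.inl hBdy
    · exact Or.inr (Or.inl hBdy)
    · exact Or.inr (Or.inr hBdy)
  obtain ⟨B', a', b', c', hr, ⟨h1, h2, h3, h4, h5, h6⟩, hsk', ht', hx', hxy'⟩ :=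
    norm3 hab hac hbc hda hdb hdc hskew ⟨h01, h12, h20⟩ hnon
  -- use finiteness to obtain an upper bound, then contradict it with the pump
  have hbdd := Set.Finite.bddAbove (Set.Finite.image (fun C => C d a') hMF)
  obtain ⟨M, hM⟩ := hbdd
  obtain ⟨m, hm⟩ := exists_nat_gt ((M - B' d a') / (2 * (B' d a' + B' d b')))
  obtain ⟨C, hrC, hbound⟩ := pump h1 h2 h3 h4 h5 h6 hsk' ht' hx' hxy' m
  have hmem : C ∈ {C | Reachable B C} := hr.trans hrC
  have hCle : C d a' ≤ M := hM ⟨C, hmem, rfl⟩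
  rw [div_lt_iff₀ (by linarith)] at hm
  have hmm : (m : ℝ) * (2 * (B' d a' + B' d b')) = 2 * m * (B' d a' + B' d b') := by ring
  rw [hmm] at hm
  linarith

end RealQuiver
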